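/- Let T be a tree on n vertices and 2 ≤ k ≤ n. Then there exists a tree partition {T_1, ..., T_r} of T into at most 2n/k trees such that each T_i has between k/3 and k vertices. -/

import Mathlib

namespace Stmt11Aux

set_option linter.unusedSectionVars false

open SimpleGraph

variable {V : Type*} [DecidableEq V] {G : SimpleGraph V}

attribute [local instance] Classical.propDecidable

variable {V : Type*} [DecidableEq V] {G : SimpleGraph V}

/-- There is a walk from `u` to `v` staying inside `A`. -/
def SW (G : SimpleGraph V) (A : Finset V) (u v : V) : Prop :=
  ∃ w : G.Walk u v, ∀ x ∈ w.support, x ∈ A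

/-- `A` is nonempty and connected in `G`. -/
def Conn (G : SimpleGraph V) (A : Finset V) : Prop :=
  A.Nonempty ∧ ∀ u ∈ A, ∀ v ∈ A, SW G A u v

lemma SW.refl {A : Finset V} {u : V} (hu : u ∈ A) : SW G A u u :=
  ⟨Walk.nil, by simp [hu]⟩

lemma SW.symm {A : Finset V} {u v : V} (h : SW G A u v) : SW G A v u := by
  obtain ⟨w, hw⟩ := h
  exact ⟨w.reverse, by simpa using hw⟩

lemma SW.trans {A : Finset V} {u v x : V} (h : SW G A u v) (h' : SW G A v x) :
    SW G A u x := by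
  obtain ⟨w, hw⟩ := h
  obtain ⟨w', hw'⟩ := h'
  refine ⟨w.append w', fun y hy => ?_⟩
  rcases (Walk.mem_support_append_iff _ _).1 hy with h | h
  · exact hw y h
  · exact hw' y h

lemma SW.mono {A B : Finset V} (hAB : A ⊆ B) {u v : V} (h : SW G A u v) : SW G B u v := by
  obtain ⟨w, hw⟩ := h
  exact ⟨w, fun x hx => hAB (hw x hx)⟩

lemma SW.mem_left {A : Finset V} {u v : V} (h : SW G A u v) : u ∈ A := by
  obtain ⟨w, hw⟩ := h
  exact hw u w.start_mem_support

lemma SW.mem_right {A : Finset V} {u v : V} (h : SW G A u v) : v ∈ A := by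
  obtain ⟨w, hw⟩ := h
  exact hw v w.end_mem_support

lemma conn_singleton (u : V) : Conn G {u} := by
  refine ⟨⟨u, by simp⟩, ?_⟩
  intro a ha b hb
  simp only [Finset.mem_singleton] at ha hb
  subst ha; subst hb
  exact SW.refl (by simp)

lemma conn_glue {X Y : Finset V} {a b : V} (hX : Conn G X) (hY : Conn G Y)
    (ha : a ∈ X) (hb : b ∈ Y) (hab : G.Adj a b) : Conn G (X ∪ Y) := by
  have hedge : SW G (X ∪ Y) a b :=
    ⟨Walk.cons hab Walk.nil, by simp [Finset.mem_union, ha, hb]⟩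
  refine ⟨⟨a, Finset.mem_union_left _ ha⟩, ?_⟩
  have hXu : ∀ u ∈ X, SW G (X ∪ Y) u a := fun u hu =>
    (hX.2 u hu a ha).mono Finset.subset_union_left
  have hYu : ∀ u ∈ Y, SW G (X ∪ Y) u a := fun u hu =>
    ((hY.2 u hu b hb).mono Finset.subset_union_right).trans hedge.symm
  intro u hu v hv
  have h1 : SW G (X ∪ Y) u a := by
    rcases Finset.mem_union.1 hu with h | h
    exacts [hXu u h, hYu u h]
  have h2 : SW G (X ∪ Y) v a := by
    rcases Finset.mem_union.1 hv with h | h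
    exacts [hXu v h, hYu v h]
  exact h1.trans h2.symm

/-- extract a path inside `A` from a walk inside `A` -/
lemma SW.exists_path {A : Finset V} {u v : V} (h : SW G A u v) :
    ∃ p : G.Walk u v, p.IsPath ∧ ∀ x ∈ p.support, x ∈ A := by
  obtain ⟨w, hw⟩ := h
  exact ⟨w.bypass, w.bypass_isPath, fun x hx => hw x (w.support_bypass_subset hx)⟩

/-- no edge between `S \ {v}` and `B \ {v}` when `S`, `B` are connected sets
meeting only at `v`, in an acyclic graph. -/
lemma no_cross (hac : G.IsAcyclic) {S B : Finset V} {v u w : V}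
    (hSB : ∀ x, x ∈ S → x ∈ B → x = v)
    (hu : u ∈ S) (hune : u ≠ v) (hw : w ∈ B) (hwne : w ≠ v)
    (hS : SW G S u v) (hB : SW G B w v) (hadj : G.Adj u w) : False := by
  obtain ⟨p1, hp1, hp1A⟩ := hS.exists_path
  obtain ⟨q, hq, hqA⟩ := hB.exists_path
  have huq : u ∉ q.support := fun h => hune (hSB u hu (hqA u h))
  have hp2 : (Walk.cons hadj q).IsPath := hq.cons huq
  have := hac.path_unique ⟨p1, hp1⟩ ⟨Walk.cons hadj q, hp2⟩
  have hwp1 : w ∈ p1.support := by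
    have : p1 = Walk.cons hadj q := congrArg Subtype.val this
    rw [this]
    simp [Walk.support_cons]
  exact hwne (hSB w (hp1A w hwp1) hw)

/-- the component of `u` in `A` with `ρ` removed. -/
noncomputable def comp (G : SimpleGraph V) (A : Finset V) (ρ u : V) : Finset V :=
  A.filter (fun y => y ≠ ρ ∧ SW G (A.erase ρ) u y)

lemma mem_comp {A : Finset V} {ρ u y : V} :
    y ∈ comp G A ρ u ↔ y ∈ A ∧ y ≠ ρ ∧ SW G (A.erase ρ) u y := by
  simp [comp]

lemma comp_subset {A : Finset V} {ρ u : V} : comp G A ρ u ⊆ A :=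
  Finset.filter_subset _ _

lemma rho_not_mem_comp {A : Finset V} {ρ u : V} : ρ ∉ comp G A ρ u := by
  simp [mem_comp]

lemma self_mem_comp {A : Finset V} {ρ u : V} (hu : u ∈ A) (huρ : u ≠ ρ) :
    u ∈ comp G A ρ u :=
  mem_comp.2 ⟨hu, huρ, SW.refl (Finset.mem_erase.2 ⟨huρ, hu⟩)⟩

lemma sw_comp {A : Finset V} {ρ u y : V} (h : SW G (A.erase ρ) u y) :
    SW G (comp G A ρ u) u y := by
  obtain ⟨w, hw⟩ := h
  refine ⟨w, fun z hz => ?_⟩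
  have hz' := hw z hz
  refine mem_comp.2 ⟨(Finset.erase_subset _ _) hz', (Finset.mem_erase.1 hz').1,
    ⟨w.takeUntil z hz, fun a ha => hw a (w.support_takeUntil_subset hz ha)⟩⟩

lemma comp_conn {A : Finset V} {ρ u : V} (hu : u ∈ A) (huρ : u ≠ ρ) :
    Conn G (comp G A ρ u) := by
  refine ⟨⟨u, self_mem_comp hu huρ⟩, fun x hx y hy => ?_⟩
  have hx' := (mem_comp.1 hx).2.2
  have hy' := (mem_comp.1 hy).2.2
  exact (sw_comp hx').symm.trans (sw_comp hy')

/-- every vertex outside the component can reach `ρ` avoiding the component. -/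
lemma sw_avoid_comp {A : Finset V} {ρ u : V} (hconn : Conn G A) (hρ : ρ ∈ A)
    {x : V} (hx : x ∈ A \ comp G A ρ u) : SW G (A \ comp G A ρ u) x ρ := by
  obtain ⟨hxA, hxC⟩ := Finset.mem_sdiff.1 hx
  obtain ⟨q, hq, hqA⟩ := (hconn.2 x hxA ρ hρ).exists_path
  refine ⟨q, fun z hz => Finset.mem_sdiff.2 ⟨hqA z hz, fun hzC => ?_⟩⟩
  obtain ⟨hzA, hzρ, hzSW⟩ := mem_comp.1 hzC
  -- the prefix of q up to z avoids ρ
  have hρtake : ρ ∉ (q.takeUntil z hz).support := by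
    intro hρin
    have hnd := hq.support_nodup
    rw [← q.take_spec hz, Walk.support_append] at hnd
    have hdisj := List.disjoint_of_nodup_append hnd
    have hρdrop : ρ ∈ (q.dropUntil z hz).support := Walk.end_mem_support _
    rw [Walk.support_eq_cons] at hρdrop
    rcases List.mem_cons.1 hρdrop with h | h
    · exact hzρ h.symm
    · exact hdisj hρin h
  have hswxz : SW G (A.erase ρ) x z := by
    refine ⟨q.takeUntil z hz, fun a ha => Finset.mem_erase.2 ⟨?_, hqA a (q.support_takeUntil_subset hz ha)⟩⟩
    rintro rfl; exact hρtake ha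
  have : SW G (A.erase ρ) u x := hzSW.trans hswxz.symm
  exact hxC (mem_comp.2 ⟨hxA, fun h => by subst h; exact (Finset.mem_erase.1 this.mem_right).1 rfl, this⟩)

lemma cut (p : ℕ) (hp : 2 ≤ p) :
    ∀ (m : ℕ) (A : Finset V) (ρ : V), A.card = m → Conn G A → ρ ∈ A → p ≤ A.card →
    ∃ (v : V) (S : Finset V), v ∈ S ∧ S ⊆ A ∧ Conn G S ∧ Conn G (insert v (A \ S)) ∧
      (ρ ∉ S ∨ ρ = v) ∧ p ≤ S.card ∧ S.card ≤ max p (2 * p - 3) := by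
  intro m
  induction m using Nat.strong_induction_on with
  | _ m IH =>
    intro A ρ hcard hconn hρ hpA
    obtain ⟨x, hxA, hxρ⟩ := Finset.exists_mem_ne (s := A) (by omega) ρ
    obtain ⟨w, hwsup⟩ := hconn.2 ρ hρ x hxA
    cases w with
    | nil => exact absurd rfl hxρ
    | @cons _ u _ h q =>
      have huA : u ∈ A := hwsup u (by simp [q.start_mem_support])
      have huρ : u ≠ ρ := h.ne'
      set C := comp G A ρ u with hC
      have hCsub : C ⊆ A := comp_subset
      have hρC : ρ ∉ C := rho_not_mem_comp
      have huC : u ∈ C := self_mem_comp huA huρ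
      have hCconn : Conn G C := comp_conn huA huρ
      have hCcard : C.card < m := by
        have : C ⊆ A.erase ρ := fun y hy =>
          Finset.mem_erase.2 ⟨(mem_comp.1 hy).2.1, hCsub hy⟩
        have := Finset.card_le_card this
        rw [Finset.card_erase_of_mem hρ] at this
        omega
      have hCpos : 0 < C.card := Finset.card_pos.2 ⟨u, huC⟩
      have hACconn : Conn G (A \ C) := by
        refine ⟨⟨ρ, Finset.mem_sdiff.2 ⟨hρ, hρC⟩⟩, fun a ha b hb => ?_⟩
        exact (sw_avoid_comp hconn hρ ha).trans (sw_avoid_comp hconn hρ hb).symm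
      have hρAC : ρ ∈ A \ C := Finset.mem_sdiff.2 ⟨hρ, hρC⟩
      have hACcard : (A \ C).card = m - C.card := by
        rw [Finset.card_sdiff_of_subset hCsub, hcard]
      by_cases h1 : p ≤ C.card
      · -- recurse into the component
        obtain ⟨v, S, hvS, hSC, hSconn, hBconn, huSv, hlb, hub⟩ :=
          IH C.card hCcard C u rfl hCconn huC h1
        refine ⟨v, S, hvS, hSC.trans hCsub, hSconn, ?_, Or.inl (fun hin => hρC (hSC hin)), hlb, hub⟩
        have hEq : insert v (A \ S) = (insert v (C \ S)) ∪ (A \ C) := by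
          ext y
          simp only [Finset.mem_insert, Finset.mem_sdiff, Finset.mem_union]
          constructor
          · rintro (rfl | ⟨hyA, hyS⟩)
            · exact Or.inl (Or.inl rfl)
            · by_cases hyC : y ∈ C
              · exact Or.inl (Or.inr ⟨hyC, hyS⟩)
              · exact Or.inr ⟨hyA, hyC⟩
          · rintro ((rfl | ⟨hyC, hyS⟩) | ⟨hyA, hyC⟩)
            · exact Or.inl rfl
            · exact Or.inr ⟨hCsub hyC, hyS⟩
            · exact Or.inr ⟨hyA, fun hyS => hyC (hSC hyS)⟩
        rw [hEq]
        have huB : u ∈ insert v (C \ S) := by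
          rcases huSv with h' | h'
          · exact Finset.mem_insert.2 (Or.inr (Finset.mem_sdiff.2 ⟨huC, h'⟩))
          · exact Finset.mem_insert.2 (Or.inl h')
        exact conn_glue hBconn hACconn huB hρAC h.symm
      · by_cases h2 : C.card = p - 1
        · -- take ρ together with the component
          refine ⟨ρ, insert ρ C, Finset.mem_insert_self _ _,
            Finset.insert_subset hρ hCsub, ?_, ?_, Or.inr rfl, ?_, ?_⟩
          · rw [Finset.insert_eq]
            exact conn_glue (conn_singleton ρ) hCconn (Finset.mem_singleton_self ρ) huC h
          · have hEq : insert ρ (A \ insert ρ C) = A \ C := by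
              ext y
              simp only [Finset.mem_insert, Finset.mem_sdiff, Finset.mem_insert]
              constructor
              · rintro (rfl | ⟨hyA, hy⟩)
                · exact ⟨hρ, hρC⟩
                · exact ⟨hyA, fun hc => hy (Or.inr hc)⟩
              · rintro ⟨hyA, hyC⟩
                by_cases hyρ : y = ρ
                · exact Or.inl hyρ
                · exact Or.inr ⟨hyA, fun hc => by rcases hc with hc | hc; exact hyρ hc; exact hyC hc⟩
            rw [hEq]; exact hACconn
          · rw [Finset.card_insert_of_notMem hρC]; omega
          · rw [Finset.card_insert_of_notMem hρC]
            have : p ≤ max p (2 * p - 3) := le_max_left _ _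
            omega
        · -- small component: remove it
          have h3 : C.card ≤ p - 2 := by omega
          by_cases h4 : p ≤ (A \ C).card
          · obtain ⟨v, S, hvS, hSA', hSconn, hBconn, hρSv, hlb, hub⟩ :=
              IH (A \ C).card (by omega) (A \ C) ρ rfl hACconn hρAC h4
            have hSA : S ⊆ A := hSA'.trans (Finset.sdiff_subset)
            have hSC : ∀ y ∈ S, y ∉ C := fun y hy => (Finset.mem_sdiff.1 (hSA' hy)).2
            refine ⟨v, S, hvS, hSA, hSconn, ?_, hρSv, hlb, hub⟩
            have hEq : insert v (A \ S) = (insert v ((A \ C) \ S)) ∪ C := by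
              ext y
              simp only [Finset.mem_insert, Finset.mem_sdiff, Finset.mem_union]
              constructor
              · rintro (rfl | ⟨hyA, hyS⟩)
                · exact Or.inl (Or.inl rfl)
                · by_cases hyC : y ∈ C
                  · exact Or.inr hyC
                  · exact Or.inl (Or.inr ⟨⟨hyA, hyC⟩, hyS⟩)
              · rintro ((rfl | ⟨⟨hyA, _⟩, hyS⟩) | hyC)
                · exact Or.inl rfl
                · exact Or.inr ⟨hyA, hyS⟩
                · exact Or.inr ⟨hCsub hyC, fun hyS => hSC y hyS hyC⟩
            rw [hEq]
            have hρB : ρ ∈ insert v ((A \ C) \ S) := by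
              rcases hρSv with h' | h'
              · exact Finset.mem_insert.2 (Or.inr (Finset.mem_sdiff.2 ⟨hρAC, h'⟩))
              · exact Finset.mem_insert.2 (Or.inl h')
            exact conn_glue hBconn hCconn hρB huC h
          · -- take everything
            refine ⟨ρ, A, hρ, le_refl A, hconn, ?_, Or.inr rfl, hpA, ?_⟩
            · rw [Finset.sdiff_self]
              simpa using conn_singleton (G := G) ρ
            · have hple : 3 ≤ p := by omega
              have : A.card ≤ 2 * p - 3 := by omega
              exact le_trans this (le_max_right _ _)
/-- an edge of an acyclic graph with an endpoint outside `insert v (A \ S)`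
has both endpoints in `S`. -/
lemma cover_side (hac : G.IsAcyclic) {A S : Finset V} {v : V} (hvS : v ∈ S) (hSA : S ⊆ A)
    (hS : Conn G S) (hB : Conn G (insert v (A \ S))) {u w : V} (hadj : G.Adj u w)
    (hu : u ∈ A) (hw : w ∈ A) (huB : u ∉ insert v (A \ S)) : u ∈ S ∧ w ∈ S := by
  simp only [Finset.mem_insert, Finset.mem_sdiff, not_or, not_and, not_not] at huB
  obtain ⟨hunv, huS⟩ := huB
  have huS := huS hu
  refine ⟨huS, ?_⟩
  by_contra hwS
  have hwB : w ∈ insert v (A \ S) := Finset.mem_insert.2 (Or.inr (Finset.mem_sdiff.2 ⟨hw, hwS⟩))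
  have hwnv : w ≠ v := fun h => hwS (h ▸ hvS)
  have hSB : ∀ x, x ∈ S → x ∈ insert v (A \ S) → x = v := by
    intro x hxS hxB
    rcases Finset.mem_insert.1 hxB with h | h
    · exact h
    · exact absurd hxS (Finset.mem_sdiff.1 h).2
  exact no_cross hac hSB huS hunv hwB hwnv (hS.2 u huS v hvS)
    (hB.2 w hwB v (Finset.mem_insert_self _ _)) hadj

lemma main (hac : G.IsAcyclic) (k : ℕ) (hk : 2 ≤ k) :
    ∀ (m : ℕ) (A : Finset V), A.card = m → Conn G A → (k + 1) / 2 ≤ m →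
    ∃ (r : ℕ) (P : Fin r → Finset V),
      r * ((k + 1) / 2) ≤ m ∧
      (∀ i, P i ⊆ A ∧ Conn G (P i)) ∧
      (∀ u v, G.Adj u v → u ∈ A → v ∈ A → ∃ i, u ∈ P i ∧ v ∈ P i) ∧
      (∀ i j, i ≠ j → ∀ x, x ∈ P i → x ∈ P j → ∀ y, y ∈ P i → y ∈ P j → x = y) ∧
      (∀ i, k ≤ 3 * (P i).card ∧ (P i).card ≤ k) := by
  intro m
  induction m using Nat.strong_induction_on with
  | _ m IH =>
    intro A hcard hconn hsm
    set s := (k + 1) / 2 with hs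
    by_cases hmk : m ≤ k
    · -- single piece
      refine ⟨1, fun _ => A, by omega, fun _ => ⟨le_refl A, hconn⟩, fun u v _ hu hv => ⟨0, hu, hv⟩,
        fun i j hij => absurd (Subsingleton.elim i j) hij,
        fun _ => ⟨show k ≤ 3 * A.card by omega, show A.card ≤ k by omega⟩⟩
    · push_neg at hmk
      by_cases hbig : s + max (s + 1) (2 * (s + 1) - 3) ≤ m + 1
      · -- cut off one piece of size in [s+1, 2s-1] and recurse
        obtain ⟨ρ, hρ⟩ := hconn.1
        obtain ⟨v, S, hvS, hSA, hSconn, hBconn, _, hlb, hub⟩ :=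
          cut (s + 1) (by omega) m A ρ hcard hconn hρ (by omega)
        set B := insert v (A \ S) with hBdef
        have hvA : v ∈ A := hSA hvS
        have hBA : B ⊆ A := Finset.insert_subset hvA Finset.sdiff_subset
        have hScard_le : S.card ≤ m := hcard ▸ Finset.card_le_card hSA
        have hBcard : B.card = m - S.card + 1 := by
          rw [hBdef, Finset.card_insert_of_notMem (fun h => (Finset.mem_sdiff.1 h).2 hvS),
            Finset.card_sdiff_of_subset hSA, hcard]
        have hsS : s + S.card ≤ m + 1 := le_trans (by omega) hbig
        have hSk : S.card ≤ k := by
          rcases le_max_iff.1 hub with h | h <;> omega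
        obtain ⟨r', P', hr', hP'sub, hP'cov, hP'sep, hP'size⟩ :=
          IH B.card (by omega) B rfl hBconn (by omega)
        have hSB : ∀ z, z ∈ S → z ∈ B → z = v := by
          intro z hzS hzB
          rcases Finset.mem_insert.1 hzB with h | h
          · exact h
          · exact absurd hzS (Finset.mem_sdiff.1 h).2
        refine ⟨r' + 1, Fin.cons S P', ?_, ?_, ?_, ?_, ?_⟩
        · have : r' * s ≤ B.card := hr'
          calc (r' + 1) * s = r' * s + s := by ring
          _ ≤ B.card + s := by omega
          _ ≤ m := by omega
        · intro i
          rcases Fin.eq_zero_or_eq_succ i with rfl | ⟨i', rfl⟩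
          · rw [Fin.cons_zero]; exact ⟨hSA, hSconn⟩
          · rw [Fin.cons_succ]; exact ⟨(hP'sub i').1.trans hBA, (hP'sub i').2⟩
        · intro u w hadj hu hw
          by_cases huB : u ∈ B
          · by_cases hwB : w ∈ B
            · obtain ⟨j, hj1, hj2⟩ := hP'cov u w hadj huB hwB
              exact ⟨j.succ, by rwa [Fin.cons_succ], by rwa [Fin.cons_succ]⟩
            · obtain ⟨h1, h2⟩ := cover_side hac hvS hSA hSconn hBconn hadj.symm hw hu hwB
              exact ⟨0, by rwa [Fin.cons_zero], by rwa [Fin.cons_zero]⟩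
          · obtain ⟨h1, h2⟩ := cover_side hac hvS hSA hSconn hBconn hadj hu hw huB
            exact ⟨0, by rwa [Fin.cons_zero], by rwa [Fin.cons_zero]⟩
        · intro i j hij
          rcases Fin.eq_zero_or_eq_succ i with rfl | ⟨i', rfl⟩ <;>
            rcases Fin.eq_zero_or_eq_succ j with rfl | ⟨j', rfl⟩
          · exact absurd rfl hij
          · simp only [Fin.cons_zero, Fin.cons_succ]
            intro x hx1 hx2 y hy1 hy2
            rw [hSB x hx1 ((hP'sub j').1 hx2), hSB y hy1 ((hP'sub j').1 hy2)]
          · simp only [Fin.cons_zero, Fin.cons_succ]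
            intro x hx1 hx2 y hy1 hy2
            rw [hSB x hx2 ((hP'sub i').1 hx1), hSB y hy2 ((hP'sub i').1 hy1)]
          · simp only [Fin.cons_succ]
            exact hP'sep i' j' (fun h => hij (by rw [h]))
        · intro i
          rcases Fin.eq_zero_or_eq_succ i with rfl | ⟨i', rfl⟩
          · rw [Fin.cons_zero]; exact ⟨by omega, hSk⟩
          · rw [Fin.cons_succ]; exact hP'size i'
      · -- two pieces
        push_neg at hbig
        have hm3 : m + 1 < s + (2 * (s + 1) - 3) := by
          rcases max_cases (s + 1) (2 * (s + 1) - 3) with ⟨hmax, hge⟩ | ⟨hmax, hge⟩ <;>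
            rw [hmax] at hbig <;> omega
        set t := (k + 2) / 3 with ht
        obtain ⟨ρ, hρ⟩ := hconn.1
        obtain ⟨v, S, hvS, hSA, hSconn, hBconn, _, hlb, hub⟩ :=
          cut (max t (m + 1 - k)) (le_trans (by omega) (le_max_right _ _)) m A ρ hcard hconn hρ
            (by rw [hcard]; exact max_le (by omega) (by omega))
        set B := insert v (A \ S) with hBdef
        have hvA : v ∈ A := hSA hvS
        have hBA : B ⊆ A := Finset.insert_subset hvA Finset.sdiff_subset
        have hScard_le : S.card ≤ m := hcard ▸ Finset.card_le_card hSA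
        have hBcard : B.card = m - S.card + 1 := by
          rw [hBdef, Finset.card_insert_of_notMem (fun h => (Finset.mem_sdiff.1 h).2 hvS),
            Finset.card_sdiff_of_subset hSA, hcard]
        have ht_le : t ≤ S.card := le_trans (le_max_left _ _) hlb
        have hmk_le : m + 1 - k ≤ S.card := le_trans (le_max_right _ _) hlb
        have hnum : S.card ≤ k ∧ k ≤ 3 * S.card ∧ m + 1 - S.card ≤ k ∧ k ≤ 3 * (m + 1 - S.card) := by
          rcases max_cases t (m + 1 - k) with ⟨hpeq, _⟩ | ⟨hpeq, _⟩ <;>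
            rw [hpeq] at hub <;> rcases le_max_iff.1 hub with h | h <;> omega
        have hSB : ∀ z, z ∈ S → z ∈ B → z = v := by
          intro z hzS hzB
          rcases Finset.mem_insert.1 hzB with h | h
          · exact h
          · exact absurd hzS (Finset.mem_sdiff.1 h).2
        refine ⟨2, ![S, B], by omega, ?_, ?_, ?_, ?_⟩
        · intro i
          fin_cases i
          · exact ⟨hSA, hSconn⟩
          · exact ⟨hBA, hBconn⟩
        · intro u w hadj hu hw
          by_cases huB : u ∈ B
          · by_cases hwB : w ∈ B
            · exact ⟨1, huB, hwB⟩
            · obtain ⟨h1, h2⟩ := cover_side hac hvS hSA hSconn hBconn hadj.symm hw hu hwB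
              exact ⟨0, h2, h1⟩
          · obtain ⟨h1, h2⟩ := cover_side hac hvS hSA hSconn hBconn hadj hu hw huB
            exact ⟨0, h1, h2⟩
        · intro i j hij
          fin_cases i <;> fin_cases j <;> simp only [Matrix.cons_val_zero, Matrix.cons_val_one, Matrix.head_cons]
          · exact absurd rfl hij
          · intro x hx1 hx2 y hy1 hy2
            rw [hSB x hx1 hx2, hSB y hy1 hy2]
          · intro x hx1 hx2 y hy1 hy2
            rw [hSB x hx2 hx1, hSB y hy2 hy1]
          · exact absurd rfl hij
        · intro i
          fin_cases i
          · exact ⟨show k ≤ 3 * S.card by omega, show S.card ≤ k by omega⟩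
          · have h1 : k ≤ 3 * B.card := by omega
            have h2 : B.card ≤ k := by omega
            exact ⟨h1, h2⟩

lemma lift_reach (P : Finset V) : ∀ {a b : V} (w : G.Walk a b),
    (∀ x ∈ w.support, x ∈ P) → ∀ (ha : a ∈ (P : Set V)) (hb : b ∈ (P : Set V)),
    ((⊤ : G.Subgraph).induce ↑P).coe.Reachable ⟨a, ha⟩ ⟨b, hb⟩ := by
  intro a b w
  induction w with
  | nil => intro _ ha hb; exact Reachable.refl _
  | @cons a c b h q ih =>
    intro hsup ha hb
    have hc : c ∈ (P : Set V) := by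
      simpa using hsup c (by simp [q.start_mem_support])
    have hadj : ((⊤ : G.Subgraph).induce ↑P).coe.Adj ⟨a, ha⟩ ⟨c, hc⟩ := by
      simp only [Subgraph.coe_adj, Subgraph.induce_adj, Subgraph.top_adj]
      exact ⟨ha, hc, h⟩
    exact (hadj.reachable).trans (ih (fun x hx => hsup x (by simp [hx])) hc hb)

end Stmt11Aux

open SimpleGraph Stmt11Aux in
/-- Let `T` be a tree on `n` vertices and `2 ≤ k ≤ n`. Then there is a tree
partition of `T` into `r ≤ 2n/k` subtrees `T_1, ..., T_r`, each edge of `T` lying in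
exactly one subtree, distinct subtrees sharing at most one vertex, and each subtree
having between `k/3` and `k` vertices. -/
theorem stmt11 (n k : ℕ) (hk2 : 2 ≤ k) (hkn : k ≤ n)
    (T : SimpleGraph (Fin n)) (hT : T.IsTree) :
    ∃ (r : ℕ) (f : Fin r → T.Subgraph),
      (r : ℝ) ≤ 2 * n / k ∧
      (∀ i, ((f i).coe).Connected ∧ ((f i).coe).IsAcyclic) ∧
      (∀ u v : Fin n, T.Adj u v → ∃! i, (f i).Adj u v) ∧
      (∀ i j, i ≠ j → ((f i).verts ∩ (f j).verts).ncard ≤ 1) ∧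
      (∀ i, (k : ℝ) / 3 ≤ ((f i).verts.ncard : ℝ) ∧ (f i).verts.ncard ≤ k) := by
  have hconn : Conn T (Finset.univ : Finset (Fin n)) := by
    refine ⟨⟨⟨0, by omega⟩, Finset.mem_univ _⟩, fun u _ v _ => ?_⟩
    obtain ⟨w⟩ := hT.isConnected.preconnected u v
    exact ⟨w, fun x _ => Finset.mem_univ x⟩
  have hcard : (Finset.univ : Finset (Fin n)).card = n := by simp
  obtain ⟨r, P, hr, hPsub, hPcov, hPsep, hPsize⟩ :=
    main hT.IsAcyclic k hk2 n Finset.univ hcard hconn (by omega)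
  refine ⟨r, fun i => (⊤ : T.Subgraph).induce ↑(P i), ?_, ?_, ?_, ?_, ?_⟩
  · -- counting
    have h1 : r * k ≤ 2 * n := by
      have h2 : k ≤ 2 * ((k + 1) / 2) := by omega
      calc r * k ≤ r * (2 * ((k + 1) / 2)) := Nat.mul_le_mul_left r h2
      _ = 2 * (r * ((k + 1) / 2)) := by ring
      _ ≤ 2 * n := by omega
    rw [le_div_iff₀ (by positivity : (0:ℝ) < (k:ℝ))]
    exact_mod_cast h1
  · intro i
    constructor
    · -- connected
      obtain ⟨⟨x, hx⟩, hCpairs⟩ := (hPsub i).2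
      haveI : Nonempty (↑((⊤ : T.Subgraph).induce ↑(P i)).verts) := ⟨⟨x, by simpa using hx⟩⟩
      refine Connected.mk ?_
      intro a b
      obtain ⟨w, hw⟩ := hCpairs a (by simpa using a.2) b (by simpa using b.2)
      have := lift_reach (P i) w hw (by simpa using a.2) (by simpa using b.2)
      convert this <;> simp
    · -- acyclic
      intro a c hc
      have hinj : Function.Injective ((⊤ : T.Subgraph).induce ↑(P i)).hom :=
        Subgraph.hom_injective
      exact hT.IsAcyclic _ ((Walk.map_isCycle_iff_of_injective hinj).2 hc)
  · intro u v huv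
    obtain ⟨i, hui, hvi⟩ := hPcov u v huv (Finset.mem_univ u) (Finset.mem_univ v)
    refine ⟨i, ?_, ?_⟩
    · simp only [Subgraph.induce_adj, Subgraph.top_adj]
      exact ⟨by simpa using hui, by simpa using hvi, huv⟩
    · intro j hj
      simp only [Subgraph.induce_adj, Subgraph.top_adj, Finset.mem_coe] at hj
      by_contra hne
      exact T.ne_of_adj huv (hPsep j i (by simpa using hne) u hj.1 hui v hj.2.1 hvi)
  · intro i j hij
    have : ((P i : Set (Fin n)) ∩ (P j : Set (Fin n))).ncard = (P i ∩ P j).card := by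
      rw [← Finset.coe_inter, Set.ncard_coe_finset]
    simp only [Subgraph.induce_verts]
    rw [this]
    rw [Finset.card_le_one]
    intro a ha b hb
    exact hPsep i j hij a (Finset.mem_inter.1 ha).1 (Finset.mem_inter.1 ha).2
      b (Finset.mem_inter.1 hb).1 (Finset.mem_inter.1 hb).2
  · intro i
    obtain ⟨h1, h2⟩ := hPsize i
    have hnc : ((⊤ : T.Subgraph).induce ↑(P i)).verts.ncard = (P i).card := by
      simp [Set.ncard_coe_finset]
    constructor
    · rw [hnc, div_le_iff₀ (by norm_num : (0:ℝ) < 3)]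
      exact_mod_cast (by omega : k ≤ (P i).card * 3)
    · rw [hnc]; exact h2
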